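/- arXiv:1507.00392 — 4 statements merged into one kernel-verified Lean document; each statement's English description precedes it below -/
import Mathlib

section
/- Let M be a complex representation of a quiver Q with ordered basis B and β ⊆ B, and let ι_β : C_β^M → Mat_{B×B}(ℂ) be the injective morphism sending a point N of the Schubert cell to its unique matrix representation in β-normal form. Then the image of ι_β equals the intersection of the variety V(M,B) with the solution set of the linear conditions (NF1)–(NF5). -/
/-!
Common framework for formalizing "Quiver Grassmannians of type D̃_n, Part 1"
(Lorscheid–Weist).

A quiver is given by finite vertex and arrow types with source and target maps.
A complex representation `M` of a quiver together with a chosen ordered basis `B`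
is encoded by the data of the basis: a finite linearly ordered type `B`, a map
`F : B → Q.V` recording over which vertex each basis vector lies, and the matrix
coefficients `μ v i j` of the structure maps, i.e. `M_v(i) = ∑ j, μ v i j • j`.
-/

open scoped Classical

noncomputable section

namespace LW

/-- A finite quiver: finite types of vertices and arrows, with source and target maps. -/
structure QuiverData : Type 1 where
  V : Type
  A : Type
  fV : Fintype V
  fA : Fintype A
  dV : DecidableEq V
  dA : DecidableEq A
  src : A → V
  tgt : A → V

attribute [instance] QuiverData.fV QuiverData.fA QuiverData.dV QuiverData.dA

/-- A finite dimensional complex representation `M` of the quiver `Q` together with an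
ordered basis `B`: `F i` is the vertex over which the basis element `i` lies, and
`μ v i j` is the coefficient of the basis element `j` in `M_v(i)`. -/
structure BasedRep (Q : QuiverData) : Type 1 where
  B : Type
  fB : Fintype B
  lB : LinearOrder B
  F : B → Q.V
  μ : Q.A → B → B → ℂ
  μ_src : ∀ v i j, μ v i j ≠ 0 → F i = Q.src v
  μ_tgt : ∀ v i j, μ v i j ≠ 0 → F j = Q.tgt v

attribute [instance] BasedRep.fB BasedRep.lB

variable {Q : QuiverData}

namespace BasedRep

variable (R : BasedRep Q)

/-- The vector space `M_p` of the representation at the vertex `p`, with coordinates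
indexed by the part of the basis lying over `p`. -/
abbrev Vtx (p : Q.V) : Type := {i : R.B // R.F i = p} → ℂ

/-- The structure map `M_v` of the representation, in the coordinates given by the basis. -/
def arrowApply (v : Q.A) (x : R.Vtx (Q.src v)) : R.Vtx (Q.tgt v) :=
  fun j => ∑ i : {i : R.B // R.F i = Q.src v}, R.μ v i.1 j.1 * x i

/-- A family of subspaces of `M`, one at each vertex. -/
abbrev SubFam : Type := ∀ p : Q.V, Submodule ℂ (R.Vtx p)

/-- The family `N` of subspaces is a subrepresentation of `M`. -/
def IsSubrep (N : R.SubFam) : Prop :=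
  ∀ (v : Q.A) (x : R.Vtx (Q.src v)), x ∈ N (Q.src v) → R.arrowApply v x ∈ N (Q.tgt v)

/-- The quiver Grassmannian `Gr_e(M)`: all subrepresentations of `M` with dimension
vector `e`. -/
def grassmannian (e : Q.V → ℕ) : Set R.SubFam :=
  {N | R.IsSubrep N ∧ ∀ p : Q.V, Module.finrank ℂ (N p) = e p}

/-- `j` is a pivot of the subspace `W ⊆ M_p`: there is a vector in `W` whose largest
nonvanishing coordinate is `j`.  The Schubert cell `C_β` of the Grassmannian consists of
the subspaces with pivot set `β` (equivalently, `Δ_β ≠ 0` and `Δ_{β'} = 0` for `β' > β`). -/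
def IsPivot {p : Q.V} (W : Submodule ℂ (R.Vtx p)) (j : {i : R.B // R.F i = p}) : Prop :=
  ∃ x ∈ W, x j ≠ 0 ∧ ∀ i : {i : R.B // R.F i = p}, j.1 < i.1 → x i = 0

/-- The Schubert cell `C_β^M ⊆ Gr_e(M)`: the intersection of the quiver Grassmannian with
the product of the Schubert cells of the ambient Grassmannians determined by `β` and the
ordered basis. -/
def schubertCell (e : Q.V → ℕ) (β : Finset R.B) : Set R.SubFam :=
  {N | N ∈ R.grassmannian e ∧
    ∀ (p : Q.V) (j : {i : R.B // R.F i = p}), j.1 ∈ β ↔ R.IsPivot (N p) j}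

/-- `β ⊆ B` is of type `e`, i.e. `#(β ∩ B_p) = e p` for every vertex `p`. -/
def IsType (e : Q.V → ℕ) (β : Finset R.B) : Prop :=
  ∀ p : Q.V, (β.filter fun i => R.F i = p).card = e p

/-- The type of a subset `β ⊆ B`, as a dimension vector. -/
def typeVec (β : Finset R.B) : Q.V → ℕ :=
  fun p => (β.filter fun i => R.F i = p).card

/-- The conditions (NF1)–(NF5) for a matrix to be in `β`-normal form. -/
def NormalForm (β : Finset R.B) (w : R.B → R.B → ℂ) : Prop :=
  (∀ i ∈ β, w i i = 1) ∧
  (∀ i ∈ β, ∀ j ∈ β, j ≠ i → w i j = 0) ∧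
  (∀ i : R.B, ∀ j ∈ β, j < i → w i j = 0) ∧
  (∀ i j : R.B, j ∉ β → w i j = 0) ∧
  (∀ i j : R.B, j ∈ β → R.F i ≠ R.F j → w i j = 0)

/-- The `j`-th column of a matrix, as a vector in `M_p`. -/
def column (w : R.B → R.B → ℂ) (j : R.B) (p : Q.V) : R.Vtx p := fun i => w i.1 j

/-- `w` is a matrix representation of the subrepresentation `N` with respect to `β`:
for every vertex `p` the columns indexed by `β ∩ B_p` form a basis of `N_p`, and all other
entries of `w` vanish. -/
def IsMatrixRep (β : Finset R.B) (N : R.SubFam) (w : R.B → R.B → ℂ) : Prop :=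
  (∀ i j : R.B, j ∉ β → w i j = 0) ∧
  (∀ i j : R.B, R.F i ≠ R.F j → w i j = 0) ∧
  (∀ p : Q.V,
    N p = Submodule.span ℂ {x : R.Vtx p | ∃ j ∈ β, R.F j = p ∧ x = R.column w j p}) ∧
  (∀ p : Q.V,
    LinearIndependent ℂ fun j : {j : R.B // j ∈ β ∧ R.F j = p} => R.column w j.1 p)

/-- The value of the polynomial `E(v,t,s)` at the matrix `w`. -/
def Efun (v : Q.A) (t s : R.B) (w : R.B → R.B → ℂ) : ℂ :=
  (∑ s' : R.B, ∑ t' : R.B, R.μ v s' t' * w t t' * w s' s) -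
    ∑ s' : R.B, R.μ v s' t * w s' s

/-- The Schubert cell in its matrix coordinates: the image of the embedding `ι_β` of
`C_β^M` into the affine space of matrices given by the unique `β`-normal form matrix
representation.  This is the model of `C_β^M` as an affine variety. -/
def cellMatrixModel (e : Q.V → ℕ) (β : Finset R.B) : Set (R.B → R.B → ℂ) :=
  {w | R.NormalForm β w ∧ ∃ N ∈ R.schubertCell e β, R.IsMatrixRep β N w}

/-- `Z` is (as an affine variety) an affine space of dimension `n`: there are mutually
inverse polynomial maps between `𝔸^n` and `Z`. -/
def IsAffineSpaceDim (Z : Set (R.B → R.B → ℂ)) (n : ℕ) : Prop :=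
  ∃ (φ : (Fin n → ℂ) → R.B → R.B → ℂ) (ψ : (R.B → R.B → ℂ) → Fin n → ℂ),
    (∀ i j : R.B, ∃ p : MvPolynomial (Fin n) ℂ, ∀ x, φ x i j = MvPolynomial.eval x p) ∧
    (∀ k : Fin n, ∃ p : MvPolynomial (R.B × R.B) ℂ,
      ∀ w, ψ w k = MvPolynomial.eval (fun q : R.B × R.B => w q.1 q.2) p) ∧
    Set.range φ = Z ∧ (∀ x, ψ (φ x) = x)

/-- The Schubert decomposition `Gr_e(M) = ∐_β C_β^M` is a decomposition into affine
spaces: every Schubert cell is empty or an affine space. -/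
def DecompIntoAffine (e : Q.V → ℕ) : Prop :=
  ∀ β : Finset R.B, R.IsType e β →
    R.schubertCell e β = ∅ ∨ ∃ n : ℕ, R.IsAffineSpaceDim (R.cellMatrixModel e β) n

/-! ### The Schubert system -/

/-- The polynomial `E(v,t,s)` in the variables `w_{i,j}`. -/
def Epoly (v : Q.A) (t s : R.B) : MvPolynomial (R.B × R.B) ℂ :=
  (∑ s' : R.B, ∑ t' : R.B,
    MvPolynomial.C (R.μ v s' t') * MvPolynomial.X (t, t') * MvPolynomial.X (s', s)) -
  ∑ s' : R.B, MvPolynomial.C (R.μ v s' t) * MvPolynomial.X (s', s)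

/-- The set `Rel²` of relevant pairs. -/
def Rel2 : Set (R.B × R.B) := {x | R.F x.1 = R.F x.2 ∧ x.1 ≤ x.2}

/-- The set `Rel³` of relevant triples `(v,t,s)` (encoded as `(v,(t,s))`). -/
def Rel3 : Set (Q.A × R.B × R.B) :=
  {y | R.F y.2.1 = Q.tgt y.1 ∧ R.F y.2.2 = Q.src y.1 ∧
    ∃ s' t' : R.B, R.μ y.1 s' t' ≠ 0 ∧ s' ≤ y.2.2 ∧ y.2.1 ≤ t'}

/-- The squarefree monomial with support `S`. -/
def monom (S : Finset (R.B × R.B)) : (R.B × R.B) →₀ ℕ := ∑ x ∈ S, Finsupp.single x 1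

/-- The weight `μ_λ` of the link `λ = ((v,t,s), S)` of the Schubert system: the
coefficient of the monomial `∏_{(i,j) ∈ S} w_{i,j}` in `E(v,t,s)`; `λ` is a link iff
this weight is nonzero. -/
def linkWeight (y : Q.A × R.B × R.B) (S : Finset (R.B × R.B)) : ℂ :=
  if y ∈ R.Rel3 ∧ ↑S ⊆ R.Rel2 then (R.Epoly y.1 y.2.1 y.2.2).coeff (R.monom S) else 0

/-- `{(v,t,s), (i,j)}` is an edge of the Schubert system, i.e. `w_{i,j}` appears in
`E(v,t,s)`. -/
def IsEdge (y : Q.A × R.B × R.B) (x : R.B × R.B) : Prop :=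
  ∃ S : Finset (R.B × R.B), R.linkWeight y S ≠ 0 ∧ x ∈ S

/-- The sum `∑_λ μ_λ ∏_{(i,j) ∈ S} g(i,j)` over all links with tip `(v,t,s)`. -/
def linkSum (y : Q.A × R.B × R.B) (g : R.B × R.B → ℂ) : ℂ :=
  ∑ S : Finset (R.B × R.B), R.linkWeight y S * ∏ x ∈ S, g x

/-- A partial evaluation of the Schubert system: a partial function `Rel² ⇀ ℂ`
satisfying the condition (EV). -/
def IsPEval (ev : R.B × R.B → Option ℂ) : Prop :=
  (∀ x : R.B × R.B, (ev x).isSome → x ∈ R.Rel2) ∧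
  ∀ (y : Q.A × R.B × R.B) (kl : R.B × R.B), R.IsEdge y kl →
    (∀ ij : R.B × R.B, R.IsEdge y ij → ij ≠ kl → (ev ij).isSome) →
    ((ev kl).isSome ∧ R.linkSum y (fun x => (ev x).getD 0) = 0)

/-- The set `Ev(f)` of all partial evaluations extending the partial function `f`. -/
def EvSet (f : R.B × R.B → Option ℂ) : Set (R.B × R.B → Option ℂ) :=
  {ev | R.IsPEval ev ∧ ∀ x c, f x = some c → ev x = some c}

/-- The partial function `f_β` determined by the normal form conditions (NF1)–(NF5). -/
def fbeta (β : Finset R.B) : R.B × R.B → Option ℂ := fun x =>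
  if x ∈ R.Rel2 then
    if x.1 = x.2 ∧ x.1 ∈ β then some 1
    else if x.1 ∈ β then some 0
    else if x.2 ∉ β then some 0
    else none
  else none

/-- The `β`-state `Σ_β` is contradictory: `Ev(f_β)` is empty. -/
def Contradictory (β : Finset R.B) : Prop := R.EvSet (R.fbeta β) = ∅

/-- A partial evaluation is total if its domain is all of `Rel²`. -/
def IsTotalEval (ev : R.B × R.B → Option ℂ) : Prop :=
  ∀ x ∈ R.Rel2, (ev x).isSome

/-- The matrix determined by a (total) evaluation. -/
def matrixOfEval (ev : R.B × R.B → Option ℂ) : R.B → R.B → ℂ :=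
  fun i j => if (i, j) ∈ R.Rel2 then (ev (i, j)).getD 0 else 0

/-! ### β-states -/

/-- The weight `μ_{β,λ}` of the link `λ = ((v,t,s),S)` of the `β`-state `Σ_β` obtained
from the minimal partial evaluation `ev`. -/
def stateWeight (ev : R.B × R.B → Option ℂ) (y : Q.A × R.B × R.B)
    (S : Finset (R.B × R.B)) : ℂ :=
  ∑ S' : Finset (R.B × R.B),
    if S'.filter (fun x => ¬(ev x).isSome) = S then
      R.linkWeight y S' * ∏ x ∈ S'.filter (fun x => (ev x).isSome), (ev x).getD 0
    else 0

/-- The `β`-relevant pairs: the vertices `(i,j) ∈ Rel²` of the `β`-state. -/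
def statePairs (ev : R.B × R.B → Option ℂ) : Set (R.B × R.B) :=
  {x | x ∈ R.Rel2 ∧ ¬(ev x).isSome}

/-- The `β`-relevant triples: the vertices `(v,t,s) ∈ Rel³` of the `β`-state, i.e. the
tips of its links. -/
def stateTriples (ev : R.B × R.B → Option ℂ) : Set (Q.A × R.B × R.B) :=
  {y | ∃ S : Finset (R.B × R.B), R.stateWeight ev y S ≠ 0}

/-- The zero set of the `β`-reduced polynomials `E_β(v,t,s)` for the `β`-relevant triples,
inside the affine space spanned by the coordinates `w_{i,j}` with `(i,j)` `β`-relevant. -/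
def stateVariety (ev : R.B × R.B → Option ℂ) : Set (R.B × R.B → ℂ) :=
  {g | (∀ x, x ∉ R.statePairs ev → g x = 0) ∧
    ∀ y ∈ R.stateTriples ev,
      ∑ S : Finset (R.B × R.B), R.stateWeight ev y S * ∏ x ∈ S, g x = 0}

/-- The matrix obtained by combining a point of the `β`-state variety with the values of
the minimal partial evaluation. -/
def stateMatrix (ev : R.B × R.B → Option ℂ) (g : R.B × R.B → ℂ) : R.B → R.B → ℂ :=
  fun i j =>
    if (i, j) ∈ R.statePairs ev then g (i, j)
    else if (i, j) ∈ R.Rel2 then (ev (i, j)).getD 0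
    else 0

/-! ### Extremal arrows and the reduced Schubert system -/

/-- The arrow `(v,s,t)` of the coefficient quiver `Γ` is extremal: every other arrow
`(v,s',t')` of `Γ` over `v` satisfies `s < s'` or `t' < t`. -/
def ExtremalArrow (v : Q.A) (s t : R.B) : Prop :=
  R.μ v s t ≠ 0 ∧
    ∀ s' t' : R.B, R.μ v s' t' ≠ 0 → (s', t') ≠ (s, t) → s < s' ∨ t' < t

/-- `β` is extremal successor closed: for every extremal arrow `(v,s,t)` of `Γ`,
`s ∈ β` implies `t ∈ β`. -/
def ExtrSuccClosed (β : Finset R.B) : Prop :=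
  ∀ v s t, R.ExtremalArrow v s t → s ∈ β → t ∈ β

/-- `β` is contradictory of the first kind: not extremal successor closed. -/
def ContradictoryFst (β : Finset R.B) : Prop := ¬ R.ExtrSuccClosed β

/-- The reduced polynomial `Ē(v,t,s)`. -/
def Ebar (v : Q.A) (t s : R.B) : MvPolynomial (R.B × R.B) ℂ :=
  (∑ t' : R.B,
    if t < t' then MvPolynomial.C (R.μ v s t') * MvPolynomial.X (t, t') else 0) +
  (∑ s' : R.B, ∑ t' : R.B,
    if t < t' ∧ s' < s then
      MvPolynomial.C (R.μ v s' t') * MvPolynomial.X (t, t') * MvPolynomial.X (s', s)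
    else 0) -
  (∑ s' : R.B,
    if s' < s then MvPolynomial.C (R.μ v s' t) * MvPolynomial.X (s', s) else 0) -
  MvPolynomial.C (R.μ v s t)

/-- The relevant pairs `(i,j)` with `i < j`: the pair vertices of the reduced Schubert
system. -/
def Rel2lt : Set (R.B × R.B) := {x | R.F x.1 = R.F x.2 ∧ x.1 < x.2}

/-- The triple vertices of the reduced Schubert system: relevant triples `(v,t,s)` such
that `(v,s,t)` is not an extremal arrow of `Γ`. -/
def Rel3red : Set (Q.A × R.B × R.B) :=
  {y | y ∈ R.Rel3 ∧ ¬ R.ExtremalArrow y.1 y.2.2 y.2.1}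

/-- The weights of the links of the reduced Schubert system `Σ̄`: the coefficients of the
monomials of the reduced polynomials `Ē(v,t,s)`. -/
def redWeight (y : Q.A × R.B × R.B) (S : Finset (R.B × R.B)) : ℂ :=
  if y ∈ R.Rel3red ∧ ↑S ⊆ R.Rel2lt then (R.Ebar y.1 y.2.1 y.2.2).coeff (R.monom S) else 0

end BasedRep

/-! ### Abstract systems, solutions, patches and patchworks -/

/-- The extension order on partial functions with values in `ℂ`. -/
def evalLE {α : Type} (e₁ e₂ : α → Option ℂ) : Prop :=
  ∀ x c, e₁ x = some c → e₂ x = some c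

/-- An edge of a system given by a weight function: `{τ, π}` is an edge iff it is a leg
of some link. -/
def edgeOf {P T : Type} (w : T → Finset P → ℂ) (τ : T) (π : P) : Prop :=
  ∃ S : Finset P, w τ S ≠ 0 ∧ π ∈ S

/-- The edge `{τ, π}` is simply linked: `(τ, {π})` is a link and `{τ, π}` is the leg of
no other link. -/
def SimplyLinked {P T : Type} (w : T → Finset P → ℂ) (τ : T) (π : P) : Prop :=
  w τ {π} ≠ 0 ∧ ∀ S : Finset P, π ∈ S → S ≠ {π} → w τ S = 0

/-- One step of the directed graph determined by an orientation of the edges of a system: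
`Aw` is the set of edges oriented away from their triple (towards their pair); all other
edges are oriented towards their triple. -/
def solStep {P T : Type} (w : T → Finset P → ℂ) (Aw : Set (T × P)) :
    T ⊕ P → T ⊕ P → Prop := fun a b =>
  match a, b with
  | Sum.inl τ, Sum.inr π => (τ, π) ∈ Aw
  | Sum.inr π, Sum.inl τ => edgeOf w τ π ∧ (τ, π) ∉ Aw
  | _, _ => False

/-- A solution for a system with triple set `triples` and weight function `w`:
an orientation of the edges such that (S1) every triple has precisely one edge oriented
away from it, and this edge is simply linked; (S2) every pair has at most one edge
oriented towards it; (S3) there are no oriented cycles. -/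
structure IsSolution {P T : Type} (triples : Set T) (w : T → Finset P → ℂ)
    (Aw : Set (T × P)) : Prop where
  mem_edge : ∀ τ π, (τ, π) ∈ Aw → edgeOf w τ π
  s1 : ∀ τ ∈ triples, ∃! π, (τ, π) ∈ Aw
  s1' : ∀ τ π, (τ, π) ∈ Aw → SimplyLinked w τ π
  s2 : ∀ π : P, {τ : T | (τ, π) ∈ Aw}.Subsingleton
  s3 : ∀ x : T ⊕ P, ¬ Relation.TransGen (solStep w Aw) x x

/-- A system is solvable if it admits a solution. -/
def Solvable {P T : Type} (triples : Set T) (w : T → Finset P → ℂ) : Prop :=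
  ∃ Aw : Set (T × P), IsSolution triples w Aw

/-- The weight function of the full subsystem on the vertex sets `P'`, `T'`. -/
def clipW {P T : Type} (P' : Set P) (T' : Set T) (w : T → Finset P → ℂ) :
    T → Finset P → ℂ :=
  fun τ S => if τ ∈ T' ∧ ↑S ⊆ P' then w τ S else 0

/-- The full subsystem on `(P', T')` is a patch of the system on `(pairs, triples)` with
weights `w`: it contains the base vertices of all links of the ambient system with a leg
in it. -/
def IsPatchOf {P T : Type} (pairs : Set P) (triples : Set T) (w : T → Finset P → ℂ)
    (P' : Set P) (T' : Set T) : Prop :=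
  P' ⊆ pairs ∧ T' ⊆ triples ∧
    ∀ τ ∈ T', ∀ S : Finset P, w τ S ≠ 0 → (∃ π ∈ S, π ∈ P') → ∀ π ∈ S, π ∈ P'

/-- A patchwork for the system on `(pairs, triples)` with weights `w`: a family of
patches indexed by a partially ordered set `I` satisfying (P1)–(P3). -/
structure Patchwork {P T : Type} (pairs : Set P) (triples : Set T)
    (w : T → Finset P → ℂ) (I : Type) [PartialOrder I] where
  pPairs : I → Set P
  pTriples : I → Set T
  isPatch : ∀ k : I, IsPatchOf pairs triples w (pPairs k) (pTriples k)
  coverP : ∀ π ∈ pairs, ∃ k : I, π ∈ pPairs k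
  coverT : ∀ τ ∈ triples, ∃ k : I, τ ∈ pTriples k
  disjT : ∀ k l : I, k ≠ l → ∀ τ : T, τ ∈ pTriples k → τ ∉ pTriples l
  p3 : ∀ (l : I) (τ : T) (π : P), τ ∈ pTriples l → edgeOf w τ π →
    ∃ k : I, k ≤ l ∧ π ∈ pPairs k

/-- A patchwork solution: a solution for every patch, satisfying the compatibility
condition (PS). -/
def IsPatchworkSolution {P T : Type} {pairs : Set P} {triples : Set T}
    {w : T → Finset P → ℂ} {I : Type} [PartialOrder I]
    (pw : Patchwork pairs triples w I) (Aw : I → Set (T × P)) : Prop :=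
  (∀ k : I, IsSolution (pw.pTriples k) (clipW (pw.pPairs k) (pw.pTriples k) w) (Aw k)) ∧
  ∀ (k l : I) (τ : T) (π : P), (τ, π) ∈ Aw k → π ∈ pw.pPairs l → k ≤ l

/-- The Euler form of a quiver. -/
def eulerForm (Q : QuiverData) (α γ : Q.V → ℤ) : ℤ :=
  (∑ p : Q.V, α p * γ p) - ∑ v : Q.A, α (Q.src v) * γ (Q.tgt v)

namespace BasedRep

variable (R : BasedRep Q)

/-- An extremal edge `{(v,t,s), (i,j)}` of the reduced Schubert system. -/
def ExtremalEdge (y : Q.A × R.B × R.B) (x : R.B × R.B) : Prop :=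
  SimplyLinked R.redWeight y x ∧
    ((x.2 = y.2.2 ∧ R.ExtremalArrow y.1 x.1 y.2.1) ∨
      (x.1 = y.2.1 ∧ R.ExtremalArrow y.1 y.2.2 x.2))

/-- An extremal solution for a (full sub)system of the reduced Schubert system with
triple set `triples` and weight function `w`: an orientation such that (ES1) every triple
has precisely one edge oriented away from it and this edge is extremal, (ES2) every pair
has at most one edge oriented towards it, (ES3) there are no oriented cycles. -/
def IsExtremalSolution (triples : Set (Q.A × R.B × R.B))
    (w : Q.A × R.B × R.B → Finset (R.B × R.B) → ℂ)
    (Aw : Set ((Q.A × R.B × R.B) × (R.B × R.B))) : Prop :=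
  (∀ τ π, (τ, π) ∈ Aw → edgeOf w τ π ∧ R.ExtremalEdge τ π) ∧
  (∀ τ ∈ triples, ∃! π, (τ, π) ∈ Aw) ∧
  (∀ π : R.B × R.B, {τ | (τ, π) ∈ Aw}.Subsingleton) ∧
  (∀ x, ¬ Relation.TransGen (solStep w Aw) x x)

/-- The (reduced) Schubert system is totally solvable: every `β`-state is either
contradictory or solvable. -/
def TotallySolvable : Prop :=
  ∀ β : Finset R.B, R.Contradictory β ∨
    ∀ ev ∈ R.EvSet (R.fbeta β), (∀ ev' ∈ R.EvSet (R.fbeta β), evalLE ev ev') →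
      Solvable (R.stateTriples ev) (R.stateWeight ev)

/-! ### Representation-theoretic notions -/

/-- The family `φ` of linear maps is an endomorphism of the representation. -/
def IsEndo (φ : ∀ p : Q.V, R.Vtx p →ₗ[ℂ] R.Vtx p) : Prop :=
  ∀ (v : Q.A) (x : R.Vtx (Q.src v)),
    φ (Q.tgt v) (R.arrowApply v x) = R.arrowApply v (φ (Q.src v) x)

/-- The representation is indecomposable: it is nonzero and every idempotent
endomorphism is `0` or the identity. -/
def Indecomposable : Prop :=
  Nonempty R.B ∧
    ∀ φ : ∀ p : Q.V, R.Vtx p →ₗ[ℂ] R.Vtx p, R.IsEndo φ →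
      (∀ p x, φ p (φ p x) = φ p x) →
      (∀ p x, φ p x = 0) ∨ (∀ p x, φ p x = x)

/-- The representation is Schurian: its endomorphism ring is `ℂ`. -/
def Schurian : Prop :=
  ∀ φ : ∀ p : Q.V, R.Vtx p →ₗ[ℂ] R.Vtx p, R.IsEndo φ → ∃ c : ℂ, ∀ p x, φ p x = c • x

/-- `Ext¹(M,M) = 0`, computed by the standard projective resolution for representations
of quivers: the map `(φ_p)_p ↦ (φ_{tgt v} ∘ M_v - M_v ∘ φ_{src v})_v` is surjective. -/
def extVanishes : Prop :=
  ∀ g : ∀ v : Q.A, R.Vtx (Q.src v) →ₗ[ℂ] R.Vtx (Q.tgt v),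
    ∃ φ : ∀ p : Q.V, R.Vtx p →ₗ[ℂ] R.Vtx p,
      ∀ (v : Q.A) (x : R.Vtx (Q.src v)),
        g v x = φ (Q.tgt v) (R.arrowApply v x) - R.arrowApply v (φ (Q.src v) x)

/-- The dimension vector of the representation. -/
def dimVec : Q.V → ℤ := fun p => (Fintype.card {i : R.B // R.F i = p} : ℤ)

/-- The dimension vector of a family of subspaces. -/
def subDimVec (N : R.SubFam) : Q.V → ℤ := fun p => (Module.finrank ℂ (N p) : ℤ)

/-- A quasi-simple (regular simple) subrepresentation: a nonzero subrepresentation of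
defect `0` having no nonzero proper subrepresentation of defect `0`. -/
def IsQuasiSimple (δ : Q.V → ℤ) (N : R.SubFam) : Prop :=
  R.IsSubrep N ∧ (∃ p, N p ≠ ⊥) ∧ eulerForm Q δ (R.subDimVec N) = 0 ∧
    ∀ P : R.SubFam, R.IsSubrep P → (∀ p, P p ≤ N p) → (∃ p, P p ≠ ⊥) → P ≠ N →
      eulerForm Q δ (R.subDimVec P) ≠ 0

/-- The (regular) representation lies in a homogeneous tube: its quasi-socle has
dimension vector `δ`, i.e. it has a quasi-simple subrepresentation of dimension vector
`δ`. -/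
def InHomogeneousTube (δ : Q.V → ℤ) : Prop :=
  ∃ N : R.SubFam, R.IsQuasiSimple δ N ∧ R.subDimVec N = δ

/-- A witness that `β` is contradictory of the second kind: the subquiver `Γ'` of the
coefficient quiver of Section 4.1, consisting of two parallel arms
`k — i_0 — ⋯ — i_s — l` and `k — j_0 — ⋯ — j_s — l` over pairwise distinct arrows
`x, z_0, …, z_{s-1}, y` of `Q`, together with the weight, membership and
"no arrow in between" conditions (2)–(5) of Section 4.1. -/
structure SecondKindWitness (R : BasedRep Q) (β : Finset R.B) where
  s : ℕ
  k : R.B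
  l : R.B
  i : Fin (s + 1) → R.B
  j : Fin (s + 1) → R.B
  x : Q.A
  y : Q.A
  z : Fin s → Q.A
  μ0 : ℂ
  μ1 : ℂ
  ν0 : ℂ
  ν1 : ℂ
  distinct_xy : x ≠ y
  distinct_xz : ∀ e, x ≠ z e
  distinct_yz : ∀ e, y ≠ z e
  z_inj : Function.Injective z
  i_lt_j : ∀ e, i e < j e
  fiber_eq : ∀ e, R.F (i e) = R.F (j e)
  one_weight_zero :
    (μ0 = 0 → μ1 ≠ 0 ∧ ν0 ≠ 0 ∧ ν1 ≠ 0) ∧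
    (μ1 = 0 → μ0 ≠ 0 ∧ ν0 ≠ 0 ∧ ν1 ≠ 0) ∧
    (ν0 = 0 → μ0 ≠ 0 ∧ μ1 ≠ 0 ∧ ν1 ≠ 0) ∧
    (ν1 = 0 → μ0 ≠ 0 ∧ μ1 ≠ 0 ∧ ν0 ≠ 0)
  arr_x :
    (Q.src x = R.F k ∧ R.μ x k (i 0) = μ0 ∧ R.μ x k (j 0) = μ1) ∨
    (Q.tgt x = R.F k ∧ R.μ x (i 0) k = μ0 ∧ R.μ x (j 0) k = μ1)
  arr_y :
    (Q.src y = R.F l ∧ R.μ y l (i (Fin.last s)) = ν0 ∧ R.μ y l (j (Fin.last s)) = ν1) ∨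
    (Q.tgt y = R.F l ∧ R.μ y (i (Fin.last s)) l = ν0 ∧ R.μ y (j (Fin.last s)) l = ν1)
  arr_z : ∀ e : Fin s,
    (R.μ (z e) (i e.castSucc) (i e.succ) = 1 ∧ R.μ (z e) (j e.castSucc) (j e.succ) = 1) ∨
    (R.μ (z e) (i e.succ) (i e.castSucc) = 1 ∧ R.μ (z e) (j e.succ) (j e.castSucc) = 1)
  weights_same :
    ((Q.src x = R.F k ∧ Q.src y = R.F l) ∨ (Q.tgt x = R.F k ∧ Q.tgt y = R.F l)) →
      μ0 * ν1 ≠ μ1 * ν0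
  weights_mixed :
    ((Q.src x = R.F k ∧ Q.tgt y = R.F l) ∨ (Q.tgt x = R.F k ∧ Q.src y = R.F l)) →
      μ0 * ν0 ≠ -(μ1 * ν1)
  mem_i : ∀ e, i e ∉ β
  mem_j : ∀ e, j e ∈ β
  mem_k : k ∈ β ↔ Q.src x = R.F k
  mem_l : l ∈ β ↔ Q.src y = R.F l
  no_between : ∀ (v : Q.A) (s' t' : R.B), R.μ v s' t' ≠ 0 →
    (v = x ∨ v = y ∨ ∃ e, v = z e) →
    ¬ ((v = x ∧ ((s' = k ∧ (t' = i 0 ∨ t' = j 0)) ∨ ((s' = i 0 ∨ s' = j 0) ∧ t' = k))) ∨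
       (v = y ∧ ((s' = l ∧ (t' = i (Fin.last s) ∨ t' = j (Fin.last s))) ∨
          ((s' = i (Fin.last s) ∨ s' = j (Fin.last s)) ∧ t' = l))) ∨
       (∃ e : Fin s, v = z e ∧
          ((s' = i e.castSucc ∧ t' = i e.succ) ∨ (s' = j e.castSucc ∧ t' = j e.succ) ∨
           (s' = i e.succ ∧ t' = i e.castSucc) ∨ (s' = j e.succ ∧ t' = j e.castSucc)))) →
    ∀ jj ∈ insert k (insert l (Finset.image j Finset.univ)),
      ∀ ii ∈ insert k (insert l (Finset.image i Finset.univ)),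
        R.F s' = R.F jj → R.F t' = R.F ii → s' < jj ∨ ii < t'

/-- `β` is contradictory of the second kind. -/
def ContradictorySnd (β : Finset R.B) : Prop :=
  R.ExtrSuccClosed β ∧ Nonempty (R.SecondKindWitness β)

end BasedRep

/-- An isomorphism of representations with chosen bases (as representations, i.e.
disregarding the bases). -/
def RepIso (R R' : BasedRep Q) : Prop :=
  ∃ φ : ∀ p : Q.V, R.Vtx p ≃ₗ[ℂ] R'.Vtx p,
    ∀ (v : Q.A) (x : R.Vtx (Q.src v)),
      φ (Q.tgt v) (R.arrowApply v x) = R'.arrowApply v (φ (Q.src v) x)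

/-! ### The quivers `D̃_n` and the Kronecker quiver -/

/-- First endpoint of the edges of the diagram `D̃_n`; the four outer vertices are
`qa = inl 0`, `qb = inl 1`, `qc = inl 2`, `qd = inl 3`, the central vertices are
`q_i = inr i` for `0 ≤ i ≤ n - 4`. Arrows: `a = inl 0`, `b = inl 1`, `c = inl 2`,
`d = inl 3` and `v_i = inr i` for `0 ≤ i ≤ n - 5`. -/
def dnEnd1 (n : ℕ) : Fin 4 ⊕ Fin (n - 4) → Fin 4 ⊕ Fin (n - 3) := fun a =>
  match a with
  | Sum.inl i => Sum.inl i
  | Sum.inr i => Sum.inr ⟨i.1, by have h := i.isLt; omega⟩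

/-- Second endpoint of the edges of the diagram `D̃_n`. -/
def dnEnd2 (n : ℕ) (hn : 4 ≤ n) : Fin 4 ⊕ Fin (n - 4) → Fin 4 ⊕ Fin (n - 3) := fun a =>
  match a with
  | Sum.inl i =>
      if i.1 ≤ 1 then Sum.inr ⟨0, by omega⟩ else Sum.inr ⟨n - 4, by omega⟩
  | Sum.inr i => Sum.inr ⟨i.1 + 1, by have h := i.isLt; omega⟩

/-- A quiver of extended Dynkin type `D̃_n`, with orientation `ω` (the value of `ω` at an
arrow decides its direction). -/
def dnQuiver (n : ℕ) (hn : 4 ≤ n) (ω : Fin 4 ⊕ Fin (n - 4) → Bool) : QuiverData where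
  V := Fin 4 ⊕ Fin (n - 3)
  A := Fin 4 ⊕ Fin (n - 4)
  fV := inferInstance
  fA := inferInstance
  dV := inferInstance
  dA := inferInstance
  src := fun a => if ω a then dnEnd1 n a else dnEnd2 n hn a
  tgt := fun a => if ω a then dnEnd2 n hn a else dnEnd1 n a

/-- The minimal positive imaginary root `δ` of `D̃_n`: `1` at the outer vertices and `2`
at the central vertices. -/
def dnDelta (n : ℕ) : Fin 4 ⊕ Fin (n - 3) → ℤ := fun p =>
  match p with
  | Sum.inl _ => 1
  | Sum.inr _ => 2

/-- The Kronecker quiver `K(2)`: two vertices and two parallel arrows from the first to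
the second. -/
def kronQuiver : QuiverData where
  V := Fin 2
  A := Fin 2
  fV := inferInstance
  fA := inferInstance
  dV := inferInstance
  dA := inferInstance
  src := fun _ => 0
  tgt := fun _ => 1

/-! ### Auxiliary lemmas for Statement 4 -/

namespace BasedRep

variable (R : BasedRep Q)

/-- Summation over the fiber of a vertex equals summation over the whole basis when the
summand vanishes outside the fiber. -/
lemma sum_fiber (p : Q.V) (f : R.B → ℂ) (hf : ∀ i, R.F i ≠ p → f i = 0) :
    ∑ i : {i : R.B // R.F i = p}, f i.1 = ∑ i : R.B, f i := by
  rw [← Finset.sum_subtype (Finset.univ.filter fun i => R.F i = p) (by simp) f]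
  exact Finset.sum_filter_of_ne fun x _ hx => by
    by_contra h; exact hx (hf x h)

/-- Summation over `β ∩ B_p` equals summation over the whole basis when the summand
vanishes outside. -/
lemma sum_gamma (β : Finset R.B) (p : Q.V) (f : R.B → ℂ)
    (hf : ∀ i, ¬(i ∈ β ∧ R.F i = p) → f i = 0) :
    ∑ i : {i : R.B // i ∈ β ∧ R.F i = p}, f i.1 = ∑ i : R.B, f i := by
  rw [← Finset.sum_subtype (Finset.univ.filter fun i => i ∈ β ∧ R.F i = p) (by simp) f]
  exact Finset.sum_filter_of_ne fun x _ hx => by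
    by_contra h; exact hx (hf x h)

lemma Efun_eq (v : Q.A) (t s : R.B) (w : R.B → R.B → ℂ) :
    R.Efun v t s w =
      (∑ t' : R.B, (∑ s' : R.B, R.μ v s' t' * w s' s) * w t t') -
        ∑ s' : R.B, R.μ v s' t * w s' s := by
  unfold Efun
  congr 1
  rw [Finset.sum_comm]
  refine Finset.sum_congr rfl fun t' _ => ?_
  rw [Finset.sum_mul]
  exact Finset.sum_congr rfl fun s' _ => by ring

/-- The set of columns of `w` over pivots in the fiber of `p` equals the range of the
corresponding family indexed by the subtype. -/
lemma colset_eq (β : Finset R.B) (w : R.B → R.B → ℂ) (p : Q.V) :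
    {x : R.Vtx p | ∃ j ∈ β, R.F j = p ∧ x = R.column w j p} =
      Set.range (fun j : {j : R.B // j ∈ β ∧ R.F j = p} => R.column w j.1 p) := by
  ext x
  constructor
  · rintro ⟨j, hj, hfj, rfl⟩; exact ⟨⟨j, hj, hfj⟩, rfl⟩
  · rintro ⟨⟨j, hj, hfj⟩, rfl⟩; exact ⟨j, hj, hfj, rfl⟩

/-- Evaluation of a linear combination of columns at a coordinate. -/
lemma eval_sum (β : Finset R.B) (w : R.B → R.B → ℂ) (p : Q.V)
    (c : {j : R.B // j ∈ β ∧ R.F j = p} → ℂ) (i : {i : R.B // R.F i = p}) :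
    (∑ k : {j : R.B // j ∈ β ∧ R.F j = p}, c k • R.column w k.1 p) i =
      ∑ k : {j : R.B // j ∈ β ∧ R.F j = p}, c k * w i.1 k.1 := by
  rw [Finset.sum_apply]
  exact Finset.sum_congr rfl fun k _ => rfl

/-- Evaluation of a linear combination of columns at a pivot coordinate gives the
corresponding coefficient, provided `w` is in normal form. -/
lemma eval_combo (β : Finset R.B) (w : R.B → R.B → ℂ) (hw : R.NormalForm β w)
    (p : Q.V) (c : {j : R.B // j ∈ β ∧ R.F j = p} → ℂ)
    (j : {j : R.B // j ∈ β ∧ R.F j = p}) :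
    (∑ k : {j : R.B // j ∈ β ∧ R.F j = p}, c k • R.column w k.1 p) ⟨j.1, j.2.2⟩ = c j := by
  rw [R.eval_sum β w p c ⟨j.1, j.2.2⟩]
  rw [Finset.sum_eq_single j]
  · rw [hw.1 j.1 j.2.1, mul_one]
  · intro k _ hk
    rw [hw.2.1 j.1 j.2.1 k.1 k.2.1 (fun h => hk (Subtype.ext h)), mul_zero]
  · intro h; exact absurd (Finset.mem_univ j) h

/-- The structure map applied to a column, in coordinates. -/
lemma arrowApply_column (v : Q.A) (s : R.B) (w : R.B → R.B → ℂ)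
    (t : {i : R.B // R.F i = Q.tgt v}) :
    R.arrowApply v (R.column w s (Q.src v)) t = ∑ s' : R.B, R.μ v s' t.1 * w s' s := by
  unfold arrowApply column
  exact R.sum_fiber (Q.src v) (fun i => R.μ v i t.1 * w i s) fun i hi => by
    show R.μ v i t.1 * w i s = 0
    by_cases h : R.μ v i t.1 = 0
    · rw [h, zero_mul]
    · exact absurd (R.μ_src v i t.1 h) hi

/-- The structure map of a quiver representation, bundled as a linear map. -/
def arrowLin (v : Q.A) : R.Vtx (Q.src v) →ₗ[ℂ] R.Vtx (Q.tgt v) where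
  toFun := R.arrowApply v
  map_add' x y := funext fun j => by
    simp [arrowApply, mul_add, Finset.sum_add_distrib]
  map_smul' a x := funext fun j => by
    simp [arrowApply, Finset.mul_sum, mul_left_comm]

/-- Reduction of the full sum over `B` to the sum over `β ∩ B_q`. -/
lemma sum_reduce (β : Finset R.B) (w : R.B → R.B → ℂ) (hw : R.NormalForm β w)
    (v : Q.A) (s t : R.B) :
    ∑ t' : R.B, (∑ s' : R.B, R.μ v s' t' * w s' s) * w t t' =
      ∑ k : {j : R.B // j ∈ β ∧ R.F j = Q.tgt v},
        (∑ s' : R.B, R.μ v s' k.1 * w s' s) * w t k.1 := by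
  refine (R.sum_gamma β (Q.tgt v) _ fun t' ht' => ?_).symm
  show (∑ s' : R.B, R.μ v s' t' * w s' s) * w t t' = 0
  by_cases hb : t' ∈ β
  · have hf : R.F t' ≠ Q.tgt v := fun h => ht' ⟨hb, h⟩
    have : ∑ s' : R.B, R.μ v s' t' * w s' s = 0 := by
      refine Finset.sum_eq_zero fun s' _ => ?_
      by_cases h : R.μ v s' t' = 0
      · rw [h, zero_mul]
      · exact absurd (R.μ_tgt v s' t' h) hf
    rw [this, zero_mul]
  · rw [hw.2.2.2.1 t t' hb, mul_zero]

end BasedRep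

/-- Lemma 1.2.  Let `ι_β : C_β^M → Mat_{B×B}(ℂ)` be the injection
sending a point of the Schubert cell to its unique matrix representation in `β`-normal
form.  Then the image of `ι_β` is the intersection of the vanishing set `V(M,B)` of the
polynomials `E(v,t,s)` with the solution set of (NF1)–(NF5): a matrix `w` in `β`-normal
form lies in the image of `ι_β` if and only if `E(v,t,s)(w) = 0` for all arrows
`v : p → q` of `Q` and all `s ∈ F⁻¹(p)`, `t ∈ F⁻¹(q)`. -/
theorem image_of_schubert_cell_is_cut_out_by_E
    (Q : QuiverData) (R : BasedRep Q) (β : Finset R.B)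
    (w : R.B → R.B → ℂ) (hw : R.NormalForm β w) :
    (∃ N ∈ R.schubertCell (R.typeVec β) β, R.IsMatrixRep β N w) ↔
      ∀ (v : Q.A) (t s : R.B), R.F t = Q.tgt v → R.F s = Q.src v →
        R.Efun v t s w = 0 := by
  obtain ⟨nf1, nf2, nf3, nf4, nf5⟩ := hw
  have hw' : R.NormalForm β w := ⟨nf1, nf2, nf3, nf4, nf5⟩
  constructor
  · rintro ⟨N, ⟨⟨hsub, -⟩, -⟩, -, -, hmr3, -⟩
    intro v t s ht hs
    by_cases hsβ : s ∈ β
    · have hcol : R.column w s (Q.src v) ∈ N (Q.src v) := by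
        rw [hmr3 (Q.src v)]
        exact Submodule.subset_span ⟨s, hsβ, hs, rfl⟩
      have hy : R.arrowApply v (R.column w s (Q.src v)) ∈ N (Q.tgt v) := hsub v _ hcol
      rw [hmr3 (Q.tgt v), R.colset_eq β w (Q.tgt v)] at hy
      obtain ⟨c, hc⟩ := (Submodule.mem_span_range_iff_exists_fun ℂ).mp hy
      have hAc : ∀ k : {j : R.B // j ∈ β ∧ R.F j = Q.tgt v},
          ∑ s' : R.B, R.μ v s' k.1 * w s' s = c k := by
        intro k
        rw [← R.arrowApply_column v s w ⟨k.1, k.2.2⟩, ← hc,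
          R.eval_combo β w hw' (Q.tgt v) c k]
      rw [R.Efun_eq, R.sum_reduce β w hw' v s t, sub_eq_zero]
      have htv : R.arrowApply v (R.column w s (Q.src v)) ⟨t, ht⟩ =
          ∑ s' : R.B, R.μ v s' t * w s' s := R.arrowApply_column v s w ⟨t, ht⟩
      rw [← htv, ← hc, R.eval_sum β w (Q.tgt v) c ⟨t, ht⟩]
      exact Finset.sum_congr rfl fun k _ => by rw [hAc k]
    · have hz : ∀ i, w i s = 0 := fun i => nf4 i s hsβ
      simp [BasedRep.Efun, hz]
  · intro hE
    set N : R.SubFam := fun p =>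
      Submodule.span ℂ {x : R.Vtx p | ∃ j ∈ β, R.F j = p ∧ x = R.column w j p} with hN
    have hNp : ∀ p : Q.V, N p = Submodule.span ℂ (Set.range
        fun j : {j : R.B // j ∈ β ∧ R.F j = p} => R.column w j.1 p) :=
      fun p => congrArg (Submodule.span ℂ) (R.colset_eq β w p)
    have hli : ∀ p : Q.V, LinearIndependent ℂ
        fun j : {j : R.B // j ∈ β ∧ R.F j = p} => R.column w j.1 p := by
      intro p
      rw [Fintype.linearIndependent_iff]
      intro g hg j
      have h0 : (∑ k : {j : R.B // j ∈ β ∧ R.F j = p},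
          g k • R.column w k.1 p) ⟨j.1, j.2.2⟩ = 0 := by rw [hg]; rfl
      rw [R.eval_combo β w hw' p g j] at h0
      exact h0
    have hsub : R.IsSubrep N := by
      intro v x hx
      have hle : N (Q.src v) ≤ Submodule.comap (R.arrowLin v) (N (Q.tgt v)) := by
        refine Submodule.span_le.mpr ?_
        rintro x' ⟨s, hsβ, hfs, rfl⟩
        show R.arrowApply v (R.column w s (Q.src v)) ∈ N (Q.tgt v)
        have key : R.arrowApply v (R.column w s (Q.src v)) =
            ∑ k : {j : R.B // j ∈ β ∧ R.F j = Q.tgt v},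
              (∑ s' : R.B, R.μ v s' k.1 * w s' s) • R.column w k.1 (Q.tgt v) := by
          funext tt
          rw [R.arrowApply_column v s w tt,
            R.eval_sum β w (Q.tgt v) (fun k => ∑ s' : R.B, R.μ v s' k.1 * w s' s) tt]
          have hE' := hE v tt.1 s tt.2 hfs
          rw [R.Efun_eq, R.sum_reduce β w hw' v s tt.1, sub_eq_zero] at hE'
          exact hE'.symm
        rw [key]
        exact Submodule.sum_mem _ fun k _ => Submodule.smul_mem _ _
          (Submodule.subset_span ⟨k.1, k.2.1, k.2.2, rfl⟩)
      exact hle hx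
    have hdim : ∀ p : Q.V, Module.finrank ℂ (N p) = R.typeVec β p := by
      intro p
      rw [hNp p, finrank_span_eq_card (hli p)]
      show Fintype.card _ = (β.filter fun i => R.F i = p).card
      rw [Fintype.card_subtype]
      congr 1
      ext i
      simp [Finset.mem_filter]
    have hpiv : ∀ (p : Q.V) (j : {i : R.B // R.F i = p}),
        j.1 ∈ β ↔ R.IsPivot (N p) j := by
      intro p j
      constructor
      · intro hj
        refine ⟨R.column w j.1 p, Submodule.subset_span ⟨j.1, hj, j.2, rfl⟩, ?_, ?_⟩
        · show w j.1 j.1 ≠ 0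
          rw [nf1 j.1 hj]; exact one_ne_zero
        · intro i hi
          exact nf3 i.1 j.1 hj hi
      · intro hpv
        by_contra hj
        obtain ⟨x, hxN, hxj, hxtop⟩ := hpv
        have hxN' : x ∈ Submodule.span ℂ (Set.range
            fun j : {j : R.B // j ∈ β ∧ R.F j = p} => R.column w j.1 p) := by
          rw [← hNp p]; exact hxN
        obtain ⟨c, hc⟩ := (Submodule.mem_span_range_iff_exists_fun ℂ).mp hxN'
        have hxj' : (∑ k : {j : R.B // j ∈ β ∧ R.F j = p},
            c k • R.column w k.1 p) j ≠ 0 := by rw [hc]; exact hxj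
        rw [R.eval_sum β w p c j] at hxj'
        obtain ⟨k, -, hk⟩ := Finset.exists_ne_zero_of_sum_ne_zero hxj'
        have hwk : w j.1 k.1 ≠ 0 := fun h => hk (by rw [h, mul_zero])
        have hlt : j.1 < k.1 := by
          rcases lt_trichotomy j.1 k.1 with h | h | h
          · exact h
          · exact absurd (h ▸ k.2.1) hj
          · exact absurd (nf3 j.1 k.1 k.2.1 h) hwk
        have hz := hxtop ⟨k.1, k.2.2⟩ hlt
        rw [← hc, R.eval_combo β w hw' p c k] at hz
        exact hk (by rw [hz, zero_mul])
    have hcross : ∀ i j : R.B, R.F i ≠ R.F j → w i j = 0 := by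
      intro i j h
      by_cases hj : j ∈ β
      · exact nf5 i j hj h
      · exact nf4 i j hj
    exact ⟨N, ⟨⟨hsub, hdim⟩, hpiv⟩, nf4, hcross, fun p => rfl, hli⟩

end LW
end
end

section
/- Let M be a thin complex representation of a quiver Q with ordered basis B. Then the reduced Schubert system Σ̄(M,B) is trivial, and for every dimension vector e the Schubert decomposition Gr_e(M) = ∐_β C_β^M is a decomposition into affine spaces. More precisely, Gr_e(M) is a point if there exists an extremal successor closed subset β ⊆ B of type e, and Gr_e(M) is empty otherwise. -/
/-!
Common framework for formalizing "Quiver Grassmannians of type D̃_n, Part 1"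
(Lorscheid–Weist).

A quiver is given by finite vertex and arrow types with source and target maps.
A complex representation `M` of a quiver together with a chosen ordered basis `B`
is encoded by the data of the basis: a finite linearly ordered type `B`, a map
`F : B → Q.V` recording over which vertex each basis vector lies, and the matrix
coefficients `μ v i j` of the structure maps, i.e. `M_v(i) = ∑ j, μ v i j • j`.
-/

open scoped Classical

noncomputable section

namespace LW

variable {Q : QuiverData}

/-! ### Auxiliary lemmas for thin representations -/

section ThinHelpers

variable {Q : QuiverData} {R : BasedRep Q}

theorem thin_fiber_subsingleton (hthin : ∀ i j : R.B, R.F i = R.F j → i = j) (p : Q.V) :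
    Subsingleton {i : R.B // R.F i = p} :=
  ⟨fun a b => Subtype.ext (hthin _ _ (a.2.trans b.2.symm))⟩

theorem thin_vec_eq_zero (hthin : ∀ i j : R.B, R.F i = R.F j → i = j) {p : Q.V}
    (x : R.Vtx p) (j : {i : R.B // R.F i = p}) (h : x j = 0) : x = 0 := by
  haveI := thin_fiber_subsingleton hthin p
  funext i
  rw [Subsingleton.elim i j]
  simpa using h

theorem thin_arrowApply (hthin : ∀ i j : R.B, R.F i = R.F j → i = j) (v : Q.A)
    (x : R.Vtx (Q.src v)) {s : R.B} (hs : R.F s = Q.src v)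
    (j : {i : R.B // R.F i = Q.tgt v}) :
    R.arrowApply v x j = R.μ v s j.1 * x ⟨s, hs⟩ := by
  haveI := thin_fiber_subsingleton hthin (Q.src v)
  haveI : Unique {i : R.B // R.F i = Q.src v} := uniqueOfSubsingleton ⟨s, hs⟩
  show (∑ i : {i : R.B // R.F i = Q.src v}, R.μ v i.1 j.1 * x i)
      = R.μ v s j.1 * x ⟨s, hs⟩
  rw [Fintype.sum_unique fun i : {i : R.B // R.F i = Q.src v} => R.μ v i.1 j.1 * x i,
    Subsingleton.elim (default : {i : R.B // R.F i = Q.src v}) ⟨s, hs⟩]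

theorem thin_extremal (hthin : ∀ i j : R.B, R.F i = R.F j → i = j) {v : Q.A} {s t : R.B}
    (h : R.μ v s t ≠ 0) : R.ExtremalArrow v s t := by
  refine ⟨h, fun s' t' h' hne => absurd ?_ hne⟩
  have hs : s' = s := hthin _ _ ((R.μ_src v s' t' h').trans (R.μ_src v s t h).symm)
  have ht : t' = t := hthin _ _ ((R.μ_tgt v s' t' h').trans (R.μ_tgt v s t h).symm)
  simp [hs, ht]

theorem thin_finrank_le (hthin : ∀ i j : R.B, R.F i = R.F j → i = j) (p : Q.V) :
    Module.finrank ℂ (R.Vtx p) ≤ 1 := by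
  have h : Module.finrank ℂ (R.Vtx p) = Fintype.card {i : R.B // R.F i = p} :=
    Module.finrank_fintype_fun_eq_card ℂ
  rw [h]
  exact Fintype.card_le_one_iff_subsingleton.mpr (thin_fiber_subsingleton hthin p)

theorem thin_sub_eq_top (hthin : ∀ i j : R.B, R.F i = R.F j → i = j) {p : Q.V}
    {S : Submodule ℂ (R.Vtx p)} (h : Module.finrank ℂ S ≠ 0) : S = ⊤ := by
  apply Submodule.eq_top_of_finrank_eq
  have h1 := Submodule.finrank_le S
  have h2 := thin_finrank_le hthin p
  omega

theorem thin_span_top (hthin : ∀ i j : R.B, R.F i = R.F j → i = j) {p : Q.V}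
    {S : Submodule ℂ (R.Vtx p)} {x : R.Vtx p} (hx : x ∈ S)
    (j₀ : {i : R.B // R.F i = p}) (h : x j₀ ≠ 0) : S = ⊤ := by
  haveI := thin_fiber_subsingleton hthin p
  rw [eq_top_iff]
  rintro y -
  have hy : y = (y j₀ / x j₀) • x := by
    funext i
    rw [Subsingleton.elim i j₀]
    simp [div_mul_cancel₀ _ h]
  rw [hy]
  exact S.smul_mem _ hx

theorem thin_grass_unique (hthin : ∀ i j : R.B, R.F i = R.F j → i = j) (e : Q.V → ℕ)
    {N N' : R.SubFam} (hN : N ∈ R.grassmannian e) (hN' : N' ∈ R.grassmannian e) :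
    N = N' := by
  funext p
  have h1 := hN.2 p
  have h2 := hN'.2 p
  by_cases hz : e p = 0
  · rw [Submodule.finrank_eq_zero.mp (h1.trans hz),
      Submodule.finrank_eq_zero.mp (h2.trans hz)]
  · rw [thin_sub_eq_top (S := N p) hthin (by rw [h1]; exact hz),
      thin_sub_eq_top (S := N' p) hthin (by rw [h2]; exact hz)]

end ThinHelpers

/-- Corollary 2.17.  Let `M` be a thin representation of `Q` with
ordered basis `B`.  Then the reduced Schubert system `Σ̄(M,B)` is trivial (it has no
vertices, edges or links), and for every dimension vector `e` the Schubert decomposition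
`Gr_e(M) = ∐_β C_β^M` is a decomposition into affine spaces.  More precisely, `Gr_e(M)`
is a point if there exists an extremal successor closed `β ⊆ B` of type `e`, and
`Gr_e(M)` is empty otherwise. -/
theorem thin_representations_trivial_reduced_system
    (Q : QuiverData) (R : BasedRep Q)
    (hthin : ∀ i j : R.B, R.F i = R.F j → i = j) :
    (R.Rel2lt = ∅ ∧ R.Rel3red = ∅ ∧ ∀ y S, R.redWeight y S = 0) ∧
    (∀ e : Q.V → ℕ, R.DecompIntoAffine e) ∧
    ∀ e : Q.V → ℕ,
      ((∃ β : Finset R.B, R.IsType e β ∧ R.ExtrSuccClosed β) →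
        ∃! N, N ∈ R.grassmannian e) ∧
      ((¬ ∃ β : Finset R.B, R.IsType e β ∧ R.ExtrSuccClosed β) →
        R.grassmannian e = ∅) := by
  have hext : ∀ (v : Q.A) (s t : R.B), R.μ v s t ≠ 0 → R.ExtremalArrow v s t :=
    fun v s t h => thin_extremal hthin h
  have h3 : R.Rel3red = ∅ := by
    ext y
    simp only [BasedRep.Rel3red, BasedRep.Rel3, Set.mem_setOf_eq,
      Set.mem_empty_iff_false, iff_false]
    rintro ⟨⟨ht, hs, s', t', hμ, -, -⟩, hne⟩
    have hs' : s' = y.2.2 := hthin _ _ ((R.μ_src _ _ _ hμ).trans hs.symm)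
    have ht' : t' = y.2.1 := hthin _ _ ((R.μ_tgt _ _ _ hμ).trans ht.symm)
    exact hne (hext _ _ _ (by rwa [hs', ht'] at hμ))
  refine ⟨⟨?_, h3, ?_⟩, ?_, ?_⟩
  · -- Rel2lt is empty
    ext x
    simp only [BasedRep.Rel2lt, Set.mem_setOf_eq, Set.mem_empty_iff_false, iff_false,
      not_and]
    exact fun hf hlt => hlt.ne (hthin _ _ hf)
  · -- all reduced weights vanish
    intro y S
    have hy : y ∉ R.Rel3red := by rw [h3]; exact Set.notMem_empty y
    simp only [BasedRep.redWeight]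
    rw [if_neg fun h => hy h.1]
  · -- decomposition into affine spaces
    intro e β hβtype
    by_cases hcell : R.schubertCell e β = ∅
    · exact Or.inl hcell
    right
    obtain ⟨N, hN⟩ := Set.nonempty_iff_ne_empty.mpr hcell
    obtain ⟨⟨hsub, hdim⟩, hpiv⟩ := hN
    set w₀ : R.B → R.B → ℂ := fun i j => if i = j ∧ j ∈ β then 1 else 0 with hw₀def
    have hw₀nf : R.NormalForm β w₀ := by
      refine ⟨fun i hi => if_pos ⟨rfl, hi⟩, fun i hi j hj hne => if_neg ?_,
        fun i j hj hlt => if_neg ?_, fun i j hj => if_neg ?_, fun i j hj hF => if_neg ?_⟩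
      · rintro ⟨rfl, -⟩; exact hne rfl
      · rintro ⟨rfl, -⟩; exact lt_irrefl _ hlt
      · rintro ⟨-, hjβ⟩; exact hj hjβ
      · rintro ⟨rfl, -⟩; exact hF rfl
    have hmr : R.IsMatrixRep β N w₀ := by
      refine ⟨fun i j hj => if_neg fun h => hj h.2,
        fun i j hF => if_neg fun h => hF (by rw [h.1]), ?_, ?_⟩
      · intro p
        haveI hfs := thin_fiber_subsingleton hthin p
        rcases isEmpty_or_nonempty {i : R.B // R.F i = p} with hemp | hnemp
        · have hall : ∀ S : Submodule ℂ (R.Vtx p), S = ⊥ := fun S =>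
            (Submodule.eq_bot_iff _).mpr fun x _ => funext fun i => isEmptyElim i
          rw [hall (N p)]
          exact (hall _).symm
        · obtain ⟨j₀⟩ := hnemp
          by_cases hj : j₀.1 ∈ β
          · obtain ⟨x, hxN, hxj, -⟩ := (hpiv p j₀).mp hj
            have h1 : N p = ⊤ := thin_span_top hthin hxN j₀ hxj
            have hc : R.column w₀ j₀.1 p ∈ Submodule.span ℂ
                {x : R.Vtx p | ∃ j ∈ β, R.F j = p ∧ x = R.column w₀ j p} :=
              Submodule.subset_span ⟨j₀.1, hj, j₀.2, rfl⟩
            have hcne : R.column w₀ j₀.1 p j₀ ≠ 0 := by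
              simp [BasedRep.column, hw₀def, hj]
            rw [h1, thin_span_top hthin hc j₀ hcne]
          · have hbot : N p = ⊥ := by
              rw [Submodule.eq_bot_iff]
              intro x hx
              by_cases hx0 : x j₀ = 0
              · exact thin_vec_eq_zero hthin x j₀ hx0
              · exact absurd ((hpiv p j₀).mpr ⟨x, hx, hx0, fun i hi =>
                  (lt_irrefl _ (by rwa [Subsingleton.elim i j₀] at hi)).elim⟩) hj
            have hset : {x : R.Vtx p | ∃ j ∈ β, R.F j = p ∧ x = R.column w₀ j p} = ∅ := by
              ext x
              simp only [Set.mem_setOf_eq, Set.mem_empty_iff_false, iff_false]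
              rintro ⟨j, hjβ, hjp, -⟩
              exact hj ((hthin j j₀.1 (hjp.trans j₀.2.symm)) ▸ hjβ)
            rw [hbot, hset, Submodule.span_empty]
      · intro p
        haveI hfs := thin_fiber_subsingleton hthin p
        haveI : Subsingleton {j : R.B // j ∈ β ∧ R.F j = p} :=
          ⟨fun a b => Subtype.ext (hthin _ _ (a.2.2.trans b.2.2.symm))⟩
        rcases isEmpty_or_nonempty {j : R.B // j ∈ β ∧ R.F j = p} with hemp | hnemp
        · exact linearIndependent_empty_type
        · obtain ⟨j₀⟩ := hnemp
          haveI : Unique {j : R.B // j ∈ β ∧ R.F j = p} := uniqueOfSubsingleton j₀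
          apply linearIndependent_unique_iff.mpr
          intro h0
          have hd : (default : {j : R.B // j ∈ β ∧ R.F j = p}) = j₀ :=
            Subsingleton.elim _ _
          rw [hd] at h0
          simpa [BasedRep.column, hw₀def, j₀.2.1] using congrFun h0 ⟨j₀.1, j₀.2.2⟩
    have hmodel : R.cellMatrixModel e β = {w₀} := by
      ext w
      simp only [BasedRep.cellMatrixModel, Set.mem_setOf_eq, Set.mem_singleton_iff]
      constructor
      · rintro ⟨⟨nf1, nf2, nf3, nf4, nf5⟩, -⟩
        funext i j
        by_cases hj : j ∈ β
        · by_cases hij : i = j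
          · subst hij; rw [nf1 i hj]; simp [hw₀def, hj]
          · rw [nf5 i j hj fun hF => hij (hthin _ _ hF)]
            simp [hw₀def, hij]
        · rw [nf4 i j hj]; simp [hw₀def, hj]
      · rintro rfl
        exact ⟨hw₀nf, N, ⟨⟨hsub, hdim⟩, hpiv⟩, hmr⟩
    refine ⟨0, fun _ => w₀, fun _ k => k.elim0, ?_, ?_, ?_, ?_⟩
    · intro i j
      exact ⟨MvPolynomial.C (w₀ i j), fun x => (MvPolynomial.eval_C _).symm⟩
    · intro k
      exact k.elim0
    · rw [hmodel]
      exact Set.range_const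
    · intro x
      funext k
      exact k.elim0
  · -- point or empty
    intro e
    constructor
    · rintro ⟨β, htype, hclosed⟩
      set N : R.SubFam := fun p =>
        if ∃ j ∈ β, R.F j = p then (⊤ : Submodule ℂ (R.Vtx p)) else ⊥ with hNdef
      have hsub : R.IsSubrep N := by
        intro v x hx
        by_cases ht : ∃ j ∈ β, R.F j = Q.tgt v
        · simp only [hNdef, if_pos ht]
          exact Submodule.mem_top
        · simp only [hNdef, if_neg ht]
          rw [Submodule.mem_bot]
          funext j
          show (∑ i : {i : R.B // R.F i = Q.src v}, R.μ v i.1 j.1 * x i) = 0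
          apply Finset.sum_eq_zero
          intro i _
          by_cases hμ : R.μ v i.1 j.1 = 0
          · rw [hμ, zero_mul]
          · have hiβ : i.1 ∉ β := fun hiβ =>
              ht ⟨j.1, hclosed v i.1 j.1 (hext _ _ _ hμ) hiβ, j.2⟩
            have hsrc : ¬ ∃ j' ∈ β, R.F j' = Q.src v := by
              rintro ⟨j', hj', hFj'⟩
              exact hiβ (hthin j' i.1 (hFj'.trans i.2.symm) ▸ hj')
            have hx0 : x = 0 := by
              have hx' := hx
              simp only [hNdef, if_neg hsrc] at hx'
              exact (Submodule.mem_bot ℂ).mp hx'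
            rw [hx0]
            simp
      have hdim : ∀ p, Module.finrank ℂ (N p) = e p := by
        intro p
        haveI hfs := thin_fiber_subsingleton hthin p
        by_cases h : ∃ j ∈ β, R.F j = p
        · obtain ⟨j, hjβ, hjp⟩ := h
          have hNt : N p = ⊤ := by simp only [hNdef]; rw [if_pos ⟨j, hjβ, hjp⟩]
          have hcard : Module.finrank ℂ (⊤ : Submodule ℂ (R.Vtx p)) = 1 := by
            rw [finrank_top]
            have hfr : Module.finrank ℂ (R.Vtx p) = Fintype.card {i : R.B // R.F i = p} :=
              Module.finrank_fintype_fun_eq_card ℂ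
            rw [hfr]
            exact Fintype.card_eq_one_iff.mpr ⟨⟨j, hjp⟩, fun b => Subsingleton.elim _ _⟩
          rw [hNt, hcard, ← htype p]
          refine (Finset.card_eq_one.mpr ⟨j, ?_⟩).symm
          ext a
          simp only [Finset.mem_filter, Finset.mem_singleton]
          constructor
          · rintro ⟨haβ, hap⟩
            exact hthin a j (hap.trans hjp.symm)
          · rintro rfl
            exact ⟨hjβ, hjp⟩
        · have hNb : N p = ⊥ := by simp only [hNdef]; rw [if_neg h]
          rw [hNb, finrank_bot, ← htype p]
          refine (Finset.card_eq_zero.mpr (Finset.filter_eq_empty_iff.mpr ?_)).symm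
          intro a ha hFa
          exact h ⟨a, ha, hFa⟩
      exact ⟨N, ⟨hsub, hdim⟩, fun N' hN' => thin_grass_unique hthin e hN' ⟨hsub, hdim⟩⟩
    · intro hno
      rw [Set.eq_empty_iff_forall_notMem]
      intro N hN
      apply hno
      refine ⟨Finset.univ.filter fun j => N (R.F j) ≠ ⊥, ?_, ?_⟩
      · intro p
        haveI hfs := thin_fiber_subsingleton hthin p
        have hdim := hN.2 p
        by_cases hb : N p = ⊥
        · have h0 : e p = 0 := by
            rw [← hdim]
            exact Submodule.finrank_eq_zero.mpr hb
          rw [h0]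
          refine Finset.card_eq_zero.mpr (Finset.filter_eq_empty_iff.mpr ?_)
          intro a ha hFa
          exact (Finset.mem_filter.mp ha).2 (by rw [hFa]; exact hb)
        · obtain ⟨x, hxN, hx0⟩ := (Submodule.ne_bot_iff _).mp hb
          have hne : Nonempty {i : R.B // R.F i = p} := by
            by_contra hemp
            haveI := not_nonempty_iff.mp hemp
            exact hx0 (funext fun i => isEmptyElim i)
          obtain ⟨j₀⟩ := hne
          have hep : e p = 1 := by
            have hle := Submodule.finrank_le (N p)
            have hle1 := thin_finrank_le hthin p
            have hpos : Module.finrank ℂ (N p) ≠ 0 := fun h0 =>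
              hb (Submodule.finrank_eq_zero.mp h0)
            omega
          rw [hep]
          refine Finset.card_eq_one.mpr ⟨j₀.1, ?_⟩
          ext a
          simp only [Finset.mem_filter, Finset.mem_univ, true_and, Finset.mem_singleton]
          constructor
          · rintro ⟨-, hap⟩
            exact hthin a j₀.1 (hap.trans j₀.2.symm)
          · rintro rfl
            exact ⟨by rw [j₀.2]; exact hb, j₀.2⟩
      · intro v s t hextArr hs
        have hμ := hextArr.1
        have hFs : R.F s = Q.src v := R.μ_src v s t hμ
        have hFt : R.F t = Q.tgt v := R.μ_tgt v s t hμ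
        have hsb : N (Q.src v) ≠ ⊥ := by
          have hmem := (Finset.mem_filter.mp hs).2
          rwa [hFs] at hmem
        obtain ⟨x, hxN, hx0⟩ := (Submodule.ne_bot_iff _).mp hsb
        have hxs : x ⟨s, hFs⟩ ≠ 0 := fun h => hx0 (thin_vec_eq_zero hthin x ⟨s, hFs⟩ h)
        have hy := hN.1 v x hxN
        have hyt : R.arrowApply v x ⟨t, hFt⟩ ≠ 0 := by
          rw [thin_arrowApply hthin v x hFs ⟨t, hFt⟩]
          exact mul_ne_zero hμ hxs
        refine Finset.mem_filter.mpr ⟨Finset.mem_univ t, ?_⟩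
        rw [hFt]
        intro hbot
        rw [hbot] at hy
        exact hyt (by rw [(Submodule.mem_bot ℂ).mp hy]; simp)

end LW
end
end

section
/- Let Ξ be a system (a bipartite graph with pair and triple vertices, links and nonzero complex weights). If Ξ admits a patchwork solution, then Ξ is solvable. -/
/-!
Common framework for formalizing "Quiver Grassmannians of type D̃_n, Part 1"
(Lorscheid–Weist).

A quiver is given by finite vertex and arrow types with source and target maps.
A complex representation `M` of a quiver together with a chosen ordered basis `B`
is encoded by the data of the basis: a finite linearly ordered type `B`, a map
`F : B → Q.V` recording over which vertex each basis vector lies, and the matrix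
coefficients `μ v i j` of the structure maps, i.e. `M_v(i) = ∑ j, μ v i j • j`.
-/

open scoped Classical

noncomputable section

namespace LW

variable {Q : QuiverData}

/-- Proposition 2.24.  Let `Ξ` be a system (a bipartite graph with
pair and triple vertices, links and nonzero complex weights).  If `Ξ` admits a patchwork
solution, then `Ξ` is solvable. -/
theorem patchwork_solution_implies_solvable
    {P T I : Type} [PartialOrder I]
    (pairs : Set P) (triples : Set T) (w : T → Finset P → ℂ)
    (hsupp : ∀ (τ : T) (S : Finset P), w τ S ≠ 0 → τ ∈ triples ∧ ∀ π ∈ S, π ∈ pairs)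
    (pw : Patchwork pairs triples w I) (Aw : I → Set (T × P))
    (hsol : IsPatchworkSolution pw Aw) :
    Solvable triples w := by
  classical
  obtain ⟨hpatch, hPS⟩ := hsol
  set A : Set (T × P) := {x | ∃ k, x ∈ Aw k} with hAdef
  -- basic facts about members of the patch solutions
  have hmemAw : ∀ {k : I} {τ : T} {π : P}, (τ, π) ∈ Aw k →
      τ ∈ pw.pTriples k ∧ π ∈ pw.pPairs k ∧ edgeOf w τ π := by
    intro k τ π h
    obtain ⟨S, hS, hπS⟩ := (hpatch k).mem_edge τ π h
    have hcond : τ ∈ pw.pTriples k ∧ ↑S ⊆ pw.pPairs k := by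
      by_contra hc
      exact hS (by simp only [clipW]; exact if_neg hc)
    have hw : w τ S ≠ 0 := by
      intro h0
      exact hS (by simp only [clipW]; rw [if_pos hcond]; exact h0)
    exact ⟨hcond.1, hcond.2 hπS, S, hw, hπS⟩
  -- edges of the ambient system with both endpoints in a patch are edges of the patch
  have hedgeclip : ∀ (k : I) (τ : T) (π : P), τ ∈ pw.pTriples k → π ∈ pw.pPairs k →
      edgeOf w τ π → edgeOf (clipW (pw.pPairs k) (pw.pTriples k) w) τ π := by
    rintro k τ π hT hP ⟨S, hS, hπ⟩
    have hsub : ↑S ⊆ pw.pPairs k := fun x hx =>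
      (pw.isPatch k).2.2 τ hT S hS ⟨π, hπ, hP⟩ x (Finset.mem_coe.mp hx)
    refine ⟨S, ?_, hπ⟩
    simp only [clipW]
    rw [if_pos ⟨hT, hsub⟩]
    exact hS
  -- key lemma: invariant along oriented paths starting at a triple of the patch k
  have key : ∀ (k : I) (τ : T), τ ∈ pw.pTriples k →
      ∀ z, Relation.TransGen (solStep w A) (Sum.inl τ) z →
      (∀ (τ' : T) (k' : I), z = Sum.inl τ' → τ' ∈ pw.pTriples k' →
        k ≤ k' ∧ (k' ≤ k → Relation.TransGen
          (solStep (clipW (pw.pPairs k) (pw.pTriples k) w) (Aw k)) (Sum.inl τ) z)) ∧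
      (∀ π : P, z = Sum.inr π → ∃ k'' : I, (∃ τ'' : T, (τ'', π) ∈ Aw k'') ∧ k ≤ k'' ∧
        (k'' ≤ k → Relation.TransGen
          (solStep (clipW (pw.pPairs k) (pw.pTriples k) w) (Aw k)) (Sum.inl τ) z)) := by
    intro k τ hτk z hz
    induction hz with
    | @single b hstep =>
      cases b with
      | inl τ₁ => exact False.elim hstep
      | inr π =>
        have hstep' : (τ, π) ∈ A := hstep
        obtain ⟨k₀, hk₀⟩ := hstep'
        have hT0 := (hmemAw hk₀).1
        have hkk : k₀ = k := by
          by_contra h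
          exact pw.disjT k₀ k h τ hT0 hτk
        subst hkk
        constructor
        · intro τ' k' h _; exact absurd h (by simp)
        · intro π' hz
          injection hz with h
          subst h
          exact ⟨k₀, ⟨τ, hk₀⟩, le_refl k₀, fun _ =>
            Relation.TransGen.single (show (τ, π) ∈ Aw k₀ from hk₀)⟩
    | @tail b c hbc hstep ih =>
      cases b with
      | inl τ₀ =>
        cases c with
        | inl _ => exact False.elim hstep
        | inr π =>
          have hstep' : (τ₀, π) ∈ A := hstep
          obtain ⟨k₀, hk₀⟩ := hstep'
          have hT0 := (hmemAw hk₀).1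
          obtain ⟨hle, hpath⟩ := ih.1 τ₀ k₀ rfl hT0
          constructor
          · intro τ' k' h _; exact absurd h (by simp)
          · intro π' hz
            injection hz with h
            subst h
            refine ⟨k₀, ⟨τ₀, hk₀⟩, hle, fun hk₀le => ?_⟩
            have hkk : k₀ = k := le_antisymm hk₀le hle
            subst hkk
            exact Relation.TransGen.tail (hpath hk₀le)
              (show (τ₀, π) ∈ Aw k₀ from hk₀)
      | inr π =>
        cases c with
        | inr _ => exact False.elim hstep
        | inl τ' =>
          have hstep' : edgeOf w τ' π ∧ (τ', π) ∉ A := hstep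
          obtain ⟨hedge, hnotA⟩ := hstep'
          obtain ⟨k'', ⟨τ'', hτ''⟩, hle'', hpath⟩ := ih.2 π rfl
          constructor
          · intro τ₁ k' hz hT'
            injection hz with h
            subst h
            obtain ⟨m, hmle, hπm⟩ := pw.p3 k' τ' π hT' hedge
            have h1 : k'' ≤ m := hPS k'' m τ'' π hτ'' hπm
            have hkk' : k ≤ k' := le_trans hle'' (le_trans h1 hmle)
            refine ⟨hkk', fun hk'k => ?_⟩
            have hm : m = k := le_antisymm (le_trans hmle hk'k) (le_trans hle'' h1)
            have hk'' : k'' ≤ k := le_trans h1 (le_trans hmle hk'k)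
            have hT'k : τ' ∈ pw.pTriples k := by
              have hh : k' = k := le_antisymm hk'k hkk'
              rwa [hh] at hT'
            have hπk : π ∈ pw.pPairs k := by rwa [hm] at hπm
            refine Relation.TransGen.tail (hpath hk'') ?_
            exact show edgeOf (clipW (pw.pPairs k) (pw.pTriples k) w) τ' π ∧
                (τ', π) ∉ Aw k from
              ⟨hedgeclip k τ' π hT'k hπk hedge, fun hmem => hnotA ⟨k, hmem⟩⟩
          · intro π' hz; exact absurd hz (by simp)
  refine ⟨A, ?_, ?_, ?_, ?_, ?_⟩
  · rintro τ π ⟨k, hk⟩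
    exact (hmemAw hk).2.2
  · intro τ hτ
    obtain ⟨k, hk⟩ := pw.coverT τ hτ
    obtain ⟨π, hπ, huniq⟩ := (hpatch k).s1 τ hk
    refine ⟨π, ⟨k, hπ⟩, ?_⟩
    rintro π' ⟨l, hl⟩
    have hTl := (hmemAw hl).1
    have hlk : l = k := by
      by_contra h
      exact pw.disjT l k h τ hTl hk
    subst hlk
    exact huniq π' hl
  · rintro τ π ⟨k, hk⟩
    have h1 := (hpatch k).s1' τ π hk
    obtain ⟨hT, hP, -⟩ := hmemAw hk
    constructor
    · intro h0
      apply h1.1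
      simp only [clipW]
      split <;> simp [h0]
    · intro S hπS hSne
      by_contra hw0
      have hsub : ↑S ⊆ pw.pPairs k := fun x hx =>
        (pw.isPatch k).2.2 τ hT S hw0 ⟨π, hπS, hP⟩ x (Finset.mem_coe.mp hx)
      have h2 := h1.2 S hπS hSne
      simp only [clipW] at h2
      rw [if_pos ⟨hT, hsub⟩] at h2
      exact hw0 h2
  · rintro π τ₁ ⟨k, hk⟩ τ₂ ⟨l, hl⟩
    have h1 := hmemAw hk
    have h2 := hmemAw hl
    have hkl : k = l := le_antisymm (hPS k l τ₁ π hk h2.2.1) (hPS l k τ₂ π hl h1.2.1)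
    subst hkl
    exact (hpatch k).s2 π hk hl
  · intro x hcyc
    obtain ⟨τ, k, hTk, hcyc'⟩ : ∃ (τ : T) (k : I), τ ∈ pw.pTriples k ∧
        Relation.TransGen (solStep w A) (Sum.inl τ) (Sum.inl τ) := by
      cases x with
      | inl τ =>
        have hcyc2 := hcyc
        cases hcyc2 with
        | single h => exact False.elim h
        | @tail b c hb hstep =>
          cases b with
          | inl _ => exact False.elim hstep
          | inr π =>
            have hstep' : edgeOf w τ π ∧ (τ, π) ∉ A := hstep
            obtain ⟨⟨S, hS, -⟩, -⟩ := hstep'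
            obtain ⟨k, hk⟩ := pw.coverT τ (hsupp τ S hS).1
            exact ⟨τ, k, hk, hcyc⟩
      | inr π =>
        have hcyc2 := hcyc
        cases hcyc2 with
        | single h => exact False.elim h
        | @tail b c hb hstep =>
          cases b with
          | inr _ => exact False.elim hstep
          | inl τ =>
            have hstep' : (τ, π) ∈ A := hstep
            obtain ⟨k, hk⟩ := hstep'
            refine ⟨τ, k, (hmemAw hk).1, ?_⟩
            exact (Relation.TransGen.single
              (show (τ, π) ∈ A from ⟨k, hk⟩ :
                solStep w A (Sum.inl τ) (Sum.inr π))).trans hb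
    have h := (key k τ hTk _ hcyc').1 τ k rfl hTk
    exact (hpatch k).s3 _ (h.2 le_rfl)

end LW
end
end

section
/- Let Σ̄ = Σ̄(M,B) be the reduced Schubert system of a complex representation M of a quiver Q with ordered basis B. If a patch Ξ of Σ̄ is an extremal path, then Ξ admits an extremal solution. -/
/-!
Common framework for formalizing "Quiver Grassmannians of type D̃_n, Part 1"
(Lorscheid–Weist).

A quiver is given by finite vertex and arrow types with source and target maps.
A complex representation `M` of a quiver together with a chosen ordered basis `B`
is encoded by the data of the basis: a finite linearly ordered type `B`, a map
`F : B → Q.V` recording over which vertex each basis vector lies, and the matrix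
coefficients `μ v i j` of the structure maps, i.e. `M_v(i) = ∑ j, μ v i j • j`.
-/

open scoped Classical

noncomputable section

namespace LW

variable {Q : QuiverData}

/-- Corollary 2.29.  If a patch `Ξ` of the reduced Schubert system
`Σ̄ = Σ̄(M,B)` is an extremal path `π₀ — τ₁ — π₁ — ⋯ — τ_n — π_n` (all of whose edges
are extremal), then `Ξ` admits an extremal solution. -/
theorem extremal_path_has_extremal_solution
    (Q : QuiverData) (R : BasedRep Q)
    (P' : Set (R.B × R.B)) (T' : Set (Q.A × R.B × R.B))
    (hpatch : IsPatchOf R.Rel2lt R.Rel3red R.redWeight P' T')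
    (n : ℕ) (πs : Fin (n + 1) → R.B × R.B) (τs : Fin n → Q.A × R.B × R.B)
    (hπ : Function.Injective πs) (hτ : Function.Injective τs)
    (hPeq : P' = Set.range πs) (hTeq : T' = Set.range τs)
    (hedge1 : ∀ e : Fin n, edgeOf (clipW P' T' R.redWeight) (τs e) (πs e.castSucc))
    (hedge2 : ∀ e : Fin n, edgeOf (clipW P' T' R.redWeight) (τs e) (πs e.succ))
    (honly : ∀ τ π, edgeOf (clipW P' T' R.redWeight) τ π →
      ∃ e : Fin n, τ = τs e ∧ (π = πs e.castSucc ∨ π = πs e.succ))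
    (hext : ∀ τ π, edgeOf (clipW P' T' R.redWeight) τ π → R.ExtremalEdge τ π) :
    ∃ Aw, R.IsExtremalSolution T' (clipW P' T' R.redWeight) Aw := by
  classical
  set w := clipW P' T' R.redWeight with hw
  set Aw : Set ((Q.A × R.B × R.B) × (R.B × R.B)) :=
    {q | ∃ e : Fin n, q = (τs e, πs e.succ)} with hAw
  -- measure function for acyclicity
  set f : (Q.A × R.B × R.B) ⊕ (R.B × R.B) → ℕ := fun a =>
    match a with
    | Sum.inl τ => if h : ∃ e, τ = τs e then 2 * (h.choose : ℕ) + 1 else 0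
    | Sum.inr π => if h : ∃ k, π = πs k then 2 * (h.choose : ℕ) else 0
    with hf
  have hfl : ∀ e : Fin n, f (Sum.inl (τs e)) = 2 * (e : ℕ) + 1 := by
    intro e
    have h : ∃ e', τs e = τs e' := ⟨e, rfl⟩
    have : h.choose = e := (hτ h.choose_spec).symm
    simp [hf, h, this]
  have hfr : ∀ k : Fin (n + 1), f (Sum.inr (πs k)) = 2 * (k : ℕ) := by
    intro k
    have h : ∃ k', πs k = πs k' := ⟨k, rfl⟩
    have : h.choose = k := (hπ h.choose_spec).symm
    simp [hf, h, this]
  have hstep : ∀ a b, solStep w Aw a b → f a < f b := by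
    rintro (τ | π) (τ' | π') h
    · exact absurd h (by simp [solStep])
    · obtain ⟨e, he⟩ := h
      obtain ⟨h1, h2⟩ := Prod.mk.injEq .. ▸ he
      subst h1; subst h2
      rw [hfl e, hfr e.succ, Fin.val_succ]
      omega
    · obtain ⟨hedge, hnot⟩ := h
      obtain ⟨e, rfl, hor⟩ := honly _ _ hedge
      rcases hor with rfl | rfl
      · rw [hfr e.castSucc, hfl e, Fin.coe_castSucc]
        omega
      · exact absurd ⟨e, rfl⟩ hnot
    · exact absurd h (by simp [solStep])
  refine ⟨Aw, ?_, ?_, ?_, ?_⟩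
  · rintro τ π ⟨e, he⟩
    obtain ⟨h1, h2⟩ := Prod.mk.injEq .. ▸ he
    subst h1; subst h2
    exact ⟨hedge2 e, hext _ _ (hedge2 e)⟩
  · intro τ hτ'
    rw [hTeq] at hτ'
    obtain ⟨e, rfl⟩ := hτ'
    refine ⟨πs e.succ, ⟨e, rfl⟩, ?_⟩
    rintro π' ⟨e', he'⟩
    obtain ⟨h1, h2⟩ := Prod.mk.injEq .. ▸ he'
    have := hτ h1
    subst this; subst h2; rfl
  · rintro π τ1 ⟨e1, he1⟩ τ2 ⟨e2, he2⟩
    obtain ⟨h1, h2⟩ := Prod.mk.injEq .. ▸ he1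
    obtain ⟨h3, h4⟩ := Prod.mk.injEq .. ▸ he2
    have : e1 = e2 := Fin.succ_injective _ (hπ (h2.symm.trans h4))
    subst this
    exact h1.trans h3.symm
  · intro x hx
    have hmono : ∀ a b, Relation.TransGen (solStep w Aw) a b → f a < f b := by
      intro a b h
      induction h with
      | single h => exact hstep _ _ h
      | tail _ h ih => exact ih.trans (hstep _ _ h)
    exact absurd (hmono _ _ hx) (lt_irrefl _)

end LW
end
end
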